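/- Let A be a subset of ℝ containing 0, closed under addition, with A ≠ {0}. Then for every finite set S = {0 = s_0 < s_1 < … < s_k} ⊆ A there exists a finite tight set T = {0 = t_0 < t_1 < … < t_ℓ} ⊆ A such that S ⊆ T, t_1 = s_1 and t_ℓ = s_k. -/

import Mathlib

lemma aux_nth_le {T : Finset ℝ} {n : ℕ} (hn : T.card = n) {m : ℕ} (hm : m < n)
    (u : Fin (m+1) → ℝ) (hu : StrictMono u) (huT : ∀ r, u r ∈ T) :
    T.orderEmbOfFin hn ⟨m, hm⟩ ≤ u (Fin.last m) := by
  set e := T.orderIsoOfFin hn with he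
  let v : Fin (m+1) → Fin n := fun r => e.symm ⟨u r, huT r⟩
  have hv : StrictMono v := fun a b hab => e.symm.strictMono (Subtype.mk_lt_mk.2 (hu hab))
  have hle : ∀ r : Fin (m+1), (r : ℕ) ≤ (v r : ℕ) := by
    intro r
    induction r using Fin.induction with
    | zero => exact Nat.zero_le _
    | succ i ih =>
        have := hv (Fin.castSucc_lt_succ : i.castSucc < i.succ)
        simp only [Fin.lt_def] at this
        have h2 : (i.castSucc : ℕ) ≤ (v i.castSucc : ℕ) := ih
        simp only [Fin.coe_castSucc] at h2
        simp [Fin.val_succ]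
        omega
  have hmon : (⟨m, hm⟩ : Fin n) ≤ v (Fin.last m) := by
    have := hle (Fin.last m)
    simp only [Fin.val_last] at this
    exact this
  calc T.orderEmbOfFin hn ⟨m, hm⟩ ≤ T.orderEmbOfFin hn (v (Fin.last m)) :=
        (T.orderEmbOfFin hn).monotone hmon
    _ = u (Fin.last m) := by
        rw [← Finset.coe_orderIsoOfFin_apply, ← he]
        show ((e (e.symm _) : {x // x ∈ T})  : ℝ) = _
        rw [OrderIso.apply_symm_apply]

lemma aux_nsmul_mem {A : Set ℝ} (hA0 : (0:ℝ) ∈ A) (hAadd : ∀ x ∈ A, ∀ y ∈ A, x + y ∈ A)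
    (n : ℕ) {x : ℝ} (hx : x ∈ A) : (n : ℝ) * x ∈ A := by
  induction n with
  | zero => simpa using hA0
  | succ m ih =>
      have h2 := hAadd _ ih _ hx
      have : ((m+1 : ℕ) : ℝ) * x = (m:ℝ) * x + x := by push_cast; ring
      rw [this]; exact h2

lemma aux_sum_mem {A : Set ℝ} (hA0 : (0:ℝ) ∈ A) (hAadd : ∀ x ∈ A, ∀ y ∈ A, x + y ∈ A)
    {ι : Type*} (S : Finset ι) (f : ι → ℝ) (hf : ∀ i ∈ S, f i ∈ A) :
    ∑ i ∈ S, f i ∈ A := by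
  classical
  induction S using Finset.induction with
  | empty => simpa using hA0
  | insert _ _ hnot ih =>
      rw [Finset.sum_insert hnot]
      exact hAadd _ (hf _ (Finset.mem_insert_self _ _)) _
        (ih fun i hi => hf i (Finset.mem_insert_of_mem hi))


/-- A finite set `T = {0 = t_0 < t_1 < … < t_ℓ}` of nonnegative reals (presented by the
strictly increasing enumeration `t : Fin (ℓ+1) → ℝ`) is tight if `t_{i+j} ≤ t_i + t_j`
whenever `0 ≤ i ≤ j ≤ i + j ≤ ℓ`. -/
def Tight (l : ℕ) (t : Fin (l + 1) → ℝ) : Prop :=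
  ∀ i j : ℕ, i ≤ j → ∀ h : i + j ≤ l,
    t ⟨i + j, by omega⟩ ≤ t ⟨i, by omega⟩ + t ⟨j, by omega⟩

/-- Let `A ⊆ ℝ` contain `0`, be closed under addition, and satisfy `A ≠ {0}`.  For every
finite set `S = {0 = s_0 < s_1 < … < s_k} ⊆ A` there is a finite tight set
`T = {0 = t_0 < t_1 < … < t_ℓ} ⊆ A` with `S ⊆ T`, `t_1 = s_1` and `t_ℓ = s_k`. -/
theorem exists_tight_superset
    (A : Set ℝ) (hA0 : (0 : ℝ) ∈ A) (hAadd : ∀ x ∈ A, ∀ y ∈ A, x + y ∈ A)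
    (hAne : A ≠ {0})
    (k : ℕ) (hk : 1 ≤ k) (s : Fin (k + 1) → ℝ)
    (hs0 : s 0 = 0) (hs : StrictMono s) (hsA : ∀ i, s i ∈ A) :
    ∃ l : ℕ, ∃ t : Fin (l + 2) → ℝ,
      t 0 = 0 ∧ StrictMono t ∧ Tight (l + 1) t ∧
      (∀ i, t i ∈ A) ∧ Set.range s ⊆ Set.range t ∧
      t 1 = s 1 ∧ t (Fin.last (l + 1)) = s (Fin.last k) := by
  classical
  set c := s 1 with hc_def
  set M := s (Fin.last k) with hM_def
  have hv1 : ((1 : Fin (k+1)) : ℕ) = 1 := by rw [Fin.val_one']; exact Nat.mod_eq_of_lt (by omega)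
  have h01 : (0 : Fin (k+1)) < 1 := by rw [Fin.lt_def, hv1]; simp
  have hc : 0 < c := by rw [← hs0]; exact hs h01
  have h1last : (1 : Fin (k+1)) ≤ Fin.last k := Fin.le_last _
  have hcM : c ≤ M := hs.monotone h1last
  have hM : 0 < M := lt_of_lt_of_le hc hcM
  set N := ⌈M / c⌉₊ with hN_def
  have hN1 : 1 ≤ N := Nat.one_le_iff_ne_zero.2 (by
    have : 0 < N := Nat.ceil_pos.2 (div_pos hM hc); omega)
  set val : (Fin k → ℕ) → ℝ := fun f => ∑ i, (f i : ℝ) * s i.succ with hval_def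
  have hspos : ∀ i : Fin k, 0 < s i.succ := by
    intro i; rw [← hs0]; exact hs i.succ_pos
  have hsgec : ∀ i : Fin k, c ≤ s i.succ := by
    intro i
    exact hs.monotone (by rw [Fin.le_def, hv1, Fin.val_succ]; omega)
  have hterm_nonneg : ∀ (f : Fin k → ℕ) (i : Fin k), 0 ≤ (f i : ℝ) * s i.succ :=
    fun f i => mul_nonneg (Nat.cast_nonneg _) (hspos i).le
  have hval_nonneg : ∀ f, 0 ≤ val f := fun f =>
    Finset.sum_nonneg fun i _ => hterm_nonneg f i
  have hvalA : ∀ f, val f ∈ A := fun f =>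
    aux_sum_mem hA0 hAadd _ _ fun i _ => aux_nsmul_mem hA0 hAadd _ (hsA i.succ)
  have hsingle : ∀ (f : Fin k → ℕ) (i : Fin k), (f i : ℝ) * s i.succ ≤ val f := by
    intro f i
    exact Finset.single_le_sum (fun r _ => hterm_nonneg f r) (Finset.mem_univ i)
  set T : Finset ℝ :=
    ((Fintype.piFinset fun _ : Fin k => Finset.range (N+1)).image val).filter
      (fun x => x ≤ M) with hT_def
  have hmemT : ∀ x : ℝ, x ∈ T ↔ (∃ f : Fin k → ℕ, (∀ i, f i ≤ N) ∧ val f = x) ∧ x ≤ M := by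
    intro x
    simp [hT_def, Finset.mem_filter, Finset.mem_image, Fintype.mem_piFinset,
      Finset.mem_range, Nat.lt_succ_iff]
  have hTnonneg : ∀ x ∈ T, 0 ≤ x := by
    intro x hx
    obtain ⟨⟨f, _, rfl⟩, _⟩ := (hmemT x).1 hx
    exact hval_nonneg f
  have hTleM : ∀ x ∈ T, x ≤ M := fun x hx => ((hmemT x).1 hx).2
  have hsT : ∀ j : Fin (k+1), s j ∈ T := by
    intro j
    induction j using Fin.cases with
    | zero =>
        rw [hmemT]
        refine ⟨⟨fun _ => 0, fun _ => Nat.zero_le _, ?_⟩, by rw [hs0]; exact hM.le⟩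
        simp [hval_def, hs0]
    | succ i =>
        rw [hmemT]
        refine ⟨⟨fun r => if r = i then 1 else 0, fun r => by dsimp only; split <;> omega, ?_⟩,
          hs.monotone (Fin.le_last _)⟩
        simp only [hval_def]
        rw [Finset.sum_eq_single i]
        · simp
        · intro b _ hb; simp [hb]
        · intro h; exact absurd (Finset.mem_univ i) h
  have h0T : (0:ℝ) ∈ T := by have := hsT 0; rwa [hs0] at this
  have hcT : c ∈ T := hsT 1
  have hMT : M ∈ T := hsT (Fin.last k)
  have hclosed : ∀ x ∈ T, ∀ y ∈ T, x + y ≤ M → x + y ∈ T := by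
    intro x hx y hy hxy
    obtain ⟨⟨f, hf, rfl⟩, _⟩ := (hmemT x).1 hx
    obtain ⟨⟨g, hg, rfl⟩, _⟩ := (hmemT y).1 hy
    set F : Fin k → ℕ := fun i => f i + g i with hF_def
    have hsum : val f + val g = val F := by
      simp only [hval_def, ← Finset.sum_add_distrib, hF_def]
      congr 1; funext i; push_cast; ring
    rw [hmemT]
    refine ⟨⟨F, ?_, hsum.symm⟩, hxy⟩
    intro i
    have h1 : (F i : ℝ) * s i.succ ≤ M := by
      calc (F i : ℝ) * s i.succ ≤ val F := hsingle F i
        _ = val f + val g := hsum.symm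
        _ ≤ M := hxy
    have h2 : (F i : ℝ) * c ≤ M :=
      le_trans (mul_le_mul_of_nonneg_left (hsgec i) (Nat.cast_nonneg _)) h1
    have h3 : (F i : ℝ) ≤ M / c := (le_div_iff₀ hc).2 h2
    have h4 : (F i : ℝ) ≤ (N : ℝ) := le_trans h3 (Nat.le_ceil _)
    exact_mod_cast h4
  have hposc : ∀ x ∈ T, x ≠ 0 → c ≤ x := by
    intro x hx hx0
    obtain ⟨⟨f, _, rfl⟩, _⟩ := (hmemT x).1 hx
    have : ∃ i, f i ≠ 0 := by
      by_contra h
      push_neg at h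
      apply hx0
      simp only [hval_def]
      apply Finset.sum_eq_zero
      intro i _; rw [h i]; simp
    obtain ⟨i, hi⟩ := this
    calc c ≤ s i.succ := hsgec i
      _ ≤ (f i : ℝ) * s i.succ := by
          nlinarith [hspos i,
            (Nat.one_le_cast.2 (Nat.one_le_iff_ne_zero.2 hi) : (1:ℝ) ≤ (f i : ℝ))]
      _ ≤ val f := hsingle f i
  have hcard2 : 2 ≤ T.card := by
    have hsub : ({0, c} : Finset ℝ) ⊆ T := by
      intro x hx
      rcases Finset.mem_insert.1 hx with rfl | hx
      · exact h0T
      · rw [Finset.mem_singleton.1 hx]; exact hcT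
    calc 2 = ({0, c} : Finset ℝ).card := (Finset.card_pair (show (0:ℝ) ≠ c from hc.ne)).symm
      _ ≤ T.card := Finset.card_le_card hsub
  refine ⟨T.card - 2, ?_⟩
  set l := T.card - 2 with hl_def
  have hcard : T.card = l + 2 := by omega
  set t := T.orderEmbOfFin hcard with ht_def
  have htmem : ∀ i, t i ∈ T := fun i => T.orderEmbOfFin_mem hcard i
  have htmono : StrictMono t := (T.orderEmbOfFin hcard).strictMono
  have hw1 : ((1 : Fin (l+2)) : ℕ) = 1 := by rw [Fin.val_one']; exact Nat.mod_eq_of_lt (by omega)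
  have ht0 : t 0 = 0 := by
    have h1 : t ⟨0, by omega⟩ = T.min' ⟨0, h0T⟩ := Finset.orderEmbOfFin_zero hcard (by omega)
    have h2 : T.min' ⟨0, h0T⟩ = 0 :=
      le_antisymm (Finset.min'_le _ _ h0T) (Finset.le_min' _ _ _ hTnonneg)
    rw [show (0 : Fin (l+2)) = ⟨0, by omega⟩ from rfl, h1, h2]
  have htlast : t (Fin.last (l+1)) = M := by
    have h1 : t ⟨l+2-1, by omega⟩ = T.max' ⟨0, h0T⟩ := Finset.orderEmbOfFin_last hcard (by omega)
    have h2 : T.max' ⟨0, h0T⟩ = M :=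
      le_antisymm (Finset.max'_le _ _ _ hTleM) (Finset.le_max' _ _ hMT)
    have h3 : Fin.last (l+1) = (⟨l+2-1, by omega⟩ : Fin (l+2)) := rfl
    rw [h3, h1, h2]
  have hrange : Set.range (t : Fin (l+2) → ℝ) = ↑T := T.range_orderEmbOfFin hcard
  have ht1 : t 1 = c := by
    have hcr : c ∈ Set.range (t : Fin (l+2) → ℝ) := by rw [hrange]; exact_mod_cast hcT
    obtain ⟨j, hj⟩ := hcr
    have hj0 : j ≠ 0 := by
      intro h; rw [h, ht0] at hj; exact hc.ne hj
    have h1j : (1 : Fin (l+2)) ≤ j := by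
      rw [Fin.le_def, hw1]
      have : (j : ℕ) ≠ 0 := fun h => hj0 (Fin.ext h)
      omega
    have hle1 : t 1 ≤ c := hj ▸ htmono.monotone h1j
    have hge1 : c ≤ t 1 := by
      apply hposc _ (htmem 1)
      have h2 : t 0 < t 1 := htmono (by rw [Fin.lt_def, hw1]; simp)
      rw [ht0] at h2
      exact h2.ne'
    exact le_antisymm hle1 hge1
  refine ⟨t, ht0, htmono, ?_, fun i => by
      have h := (hmemT _).1 (htmem i); exact h.1.elim fun f hf => hf.2 ▸ hvalA f,
    ?_, ht1, htlast⟩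
  · -- tightness
    intro i j hij hsum
    rcases Nat.eq_zero_or_pos j with rfl | hj1
    · have hi0 : i = 0 := by omega
      subst hi0
      have h0 : t ⟨0, by omega⟩ = 0 := ht0
      simp only [h0]
      norm_num
    by_cases hx : t ⟨i, by omega⟩ + t ⟨j, by omega⟩ ≤ M
    · set u : Fin (i+j+1) → ℝ := fun r =>
        if (r : ℕ) ≤ i then t ⟨(r : ℕ), by omega⟩
        else t ⟨i, by omega⟩ + t ⟨(r : ℕ) - i, by omega⟩ with hu_def
      have htj0 : (0:ℝ) ≤ t ⟨j, by omega⟩ := hTnonneg _ (htmem _)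
      have hub : ∀ r : Fin (i+j+1), u r ≤ t ⟨i, by omega⟩ + t ⟨j, by omega⟩ := by
        intro r
        simp only [hu_def]
        split_ifs with h
        · have h1 : t ⟨(r:ℕ), by omega⟩ ≤ t ⟨i, by omega⟩ :=
            htmono.monotone (Fin.mk_le_mk.2 h)
          linarith
        · have h1 : t ⟨(r:ℕ) - i, by omega⟩ ≤ t ⟨j, by omega⟩ := by
            apply htmono.monotone
            apply Fin.mk_le_mk.2
            have := r.is_lt
            omega
          linarith
      have huT : ∀ r, u r ∈ T := by
        intro r
        simp only [hu_def]
        split_ifs with h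
        · exact htmem _
        · refine hclosed _ (htmem _) _ (htmem _) ?_
          have h1 : t ⟨(r:ℕ) - i, by omega⟩ ≤ t ⟨j, by omega⟩ := by
            apply htmono.monotone
            apply Fin.mk_le_mk.2
            have := r.is_lt
            omega
          linarith
      have humono : StrictMono u := by
        intro a b hab
        rw [Fin.lt_def] at hab
        simp only [hu_def]
        split_ifs with h1 h2 h2
        · exact htmono (Fin.mk_lt_mk.2 hab)
        · have hpos : t ⟨0, by omega⟩ < t ⟨(b:ℕ) - i, by omega⟩ :=
            htmono (Fin.mk_lt_mk.2 (by omega))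
          have h0 : t ⟨0, by omega⟩ = 0 := ht0
          have hle : t ⟨(a:ℕ), by omega⟩ ≤ t ⟨i, by omega⟩ :=
            htmono.monotone (Fin.mk_le_mk.2 h1)
          rw [h0] at hpos
          linarith
        · omega
        · have h3 : t ⟨(a:ℕ) - i, by omega⟩ < t ⟨(b:ℕ) - i, by omega⟩ :=
            htmono (Fin.mk_lt_mk.2 (by omega))
          linarith
      have hfinal := aux_nth_le hcard (show i + j < l + 2 by omega) u humono huT
      have hulast : u (Fin.last (i+j)) = t ⟨i, by omega⟩ + t ⟨j, by omega⟩ := by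
        have hmk : (⟨i + j - i, by omega⟩ : Fin (l+2)) = ⟨j, by omega⟩ := Fin.ext (show i + j - i = j by omega)
        have hmk2 : t ⟨i + j - i, by omega⟩ = t ⟨j, by omega⟩ := congrArg t hmk
        simp only [hu_def, Fin.val_last]
        rw [if_neg (by omega)]
        rw [hmk2]
      rw [hulast] at hfinal
      exact hfinal
    · push_neg at hx
      have h1 : t ⟨i+j, by omega⟩ ≤ t ⟨l+1, by omega⟩ :=
        htmono.monotone (Fin.mk_le_mk.2 hsum)
      have hM' : t ⟨l+1, by omega⟩ = M := htlast
      linarith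
  · intro x hx
    obtain ⟨i, rfl⟩ := hx
    rw [hrange]
    exact_mod_cast hsT i
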